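/- Let n ≥ 3 be an integer, H a real number, and φ a positive continuously differentiable function on an interval of radii. If (r, z, σ) is a solution of the profile ODE system on the interval (s₀ − ε, s₀ + ε), then the reflected triple r̃(s) = r(2s₀ − s), z̃(s) = 2 z(s₀) − z(2s₀ − s), σ̃(s) = π − σ(2s₀ − s) is also a solution of the same system on (s₀ − ε, s₀ + ε). In particular, if σ(s₀) = π/2, then the reflected solution takes at s₀ the same values r(s₀), z(s₀), σ(s₀) as the original one, so a solution with vertical tangent at s₀ extends past s₀ by reflection across the horizontal line z = z(s₀). -/

import Mathlib

open Set Filter Real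

/-- For an integer `n ≥ 3`, a real number `H`, and a positive continuously
differentiable function `φ` on an interval of radii `[0, b]`: if `(r, z, σ)` is a solution of
the profile ODE system
`r' = cos σ`, `z' = sin σ`, `σ' = (n-1)H - (n-2)(φ'(r)/φ(r)) sin σ`
on `(s₀ - ε, s₀ + ε)`, then the reflected triple
`r̃(s) = r(2s₀ - s)`, `z̃(s) = 2 z(s₀) - z(2s₀ - s)`, `σ̃(s) = π - σ(2s₀ - s)`
is also a solution of the same system on `(s₀ - ε, s₀ + ε)`; in particular, if `σ(s₀) = π/2`
then the reflected solution takes at `s₀` the same values `r(s₀)`, `z(s₀)`, `σ(s₀)` as the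
original one (so a solution with vertical tangent at `s₀` extends past `s₀` by reflection
across the horizontal line `z = z(s₀)`). -/
theorem reflected_solution_of_profile_ODE
    (n : ℕ) (hn : 3 ≤ n) (H : ℝ) (b : ℝ) (hb : 0 < b)
    (φ φ' : ℝ → ℝ)
    (hφpos : ∀ x ∈ Icc (0:ℝ) b, 0 < φ x)
    (hφderiv : ∀ x ∈ Icc (0:ℝ) b, HasDerivWithinAt φ (φ' x) (Icc (0:ℝ) b) x)
    (hφ'cont : ContinuousOn φ' (Icc (0:ℝ) b))
    (r z σ : ℝ → ℝ) (s₀ ε : ℝ) (hε : 0 < ε)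
    (hmem : ∀ s ∈ Ioo (s₀ - ε) (s₀ + ε), r s ∈ Icc (0:ℝ) b)
    (hr : ∀ s ∈ Ioo (s₀ - ε) (s₀ + ε), HasDerivAt r (Real.cos (σ s)) s)
    (hz : ∀ s ∈ Ioo (s₀ - ε) (s₀ + ε), HasDerivAt z (Real.sin (σ s)) s)
    (hσ : ∀ s ∈ Ioo (s₀ - ε) (s₀ + ε), HasDerivAt σ
      (((n : ℝ) - 1) * H - ((n : ℝ) - 2) * (φ' (r s) / φ (r s)) * Real.sin (σ s)) s) :
    (∀ s ∈ Ioo (s₀ - ε) (s₀ + ε), r (2 * s₀ - s) ∈ Icc (0:ℝ) b) ∧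
    (∀ s ∈ Ioo (s₀ - ε) (s₀ + ε),
      HasDerivAt (fun t => r (2 * s₀ - t)) (Real.cos (π - σ (2 * s₀ - s))) s) ∧
    (∀ s ∈ Ioo (s₀ - ε) (s₀ + ε),
      HasDerivAt (fun t => 2 * z s₀ - z (2 * s₀ - t)) (Real.sin (π - σ (2 * s₀ - s))) s) ∧
    (∀ s ∈ Ioo (s₀ - ε) (s₀ + ε),
      HasDerivAt (fun t => π - σ (2 * s₀ - t))
        (((n : ℝ) - 1) * H - ((n : ℝ) - 2) * (φ' (r (2 * s₀ - s)) / φ (r (2 * s₀ - s))) *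
          Real.sin (π - σ (2 * s₀ - s))) s) ∧
    (σ s₀ = π / 2 →
      r (2 * s₀ - s₀) = r s₀ ∧
      2 * z s₀ - z (2 * s₀ - s₀) = z s₀ ∧
      π - σ (2 * s₀ - s₀) = σ s₀) := by

  have hrefl : ∀ s ∈ Ioo (s₀ - ε) (s₀ + ε), 2 * s₀ - s ∈ Ioo (s₀ - ε) (s₀ + ε) := by
    intro s hs
    constructor <;> [linarith [hs.2]; linarith [hs.1]]
  have hinner : ∀ s : ℝ, HasDerivAt (fun t : ℝ => 2 * s₀ - t) (-1) s := by
    intro s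
    simpa using ((hasDerivAt_id s).const_sub (2 * s₀))
  refine ⟨fun s hs => hmem _ (hrefl s hs), ?_, ?_, ?_, ?_⟩
  · intro s hs
    have := ((hr _ (hrefl s hs)).comp s (hinner s))
    simpa [Real.cos_pi_sub, mul_comm, Function.comp_def] using this
  · intro s hs
    have := (((hz _ (hrefl s hs)).comp s (hinner s)).const_sub (2 * z s₀))
    simpa [Real.sin_pi_sub] using this
  · intro s hs
    have := (((hσ _ (hrefl s hs)).comp s (hinner s)).const_sub π)
    have h2 : -((((n : ℝ) - 1) * H - ((n : ℝ) - 2) * (φ' (r (2 * s₀ - s)) / φ (r (2 * s₀ - s))) * Real.sin (σ (2 * s₀ - s))) * (-1)) = ((n : ℝ) - 1) * H - ((n : ℝ) - 2) * (φ' (r (2 * s₀ - s)) / φ (r (2 * s₀ - s))) * Real.sin (π - σ (2 * s₀ - s)) := by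
      rw [Real.sin_pi_sub]; ring
    rw [← h2]
    exact this
  · intro h
    refine ⟨by ring_nf, by ring_nf, ?_⟩
    rw [show 2 * s₀ - s₀ = s₀ by ring, h]
    ring
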